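/- Let a, b > 0, let B be a Beta(a,b) random variable and E an independent standard exponential random variable, and let p > 0. Then P(1 − B < E/(pw)) ∼ (Γ(b)/B(a,b)) · (pw)^{-b} as w → ∞. -/

import Mathlib

open MeasureTheory Filter Real Asymptotics Set

/-- The Beta(a,b) distribution on ℝ, via its density. -/
noncomputable def betaM (a b : ℝ) : Measure ℝ :=
  volume.withDensity fun x => ENNReal.ofReal
    (if 0 < x ∧ x < 1 then
      x ^ (a - 1) * (1 - x) ^ (b - 1) * (Real.Gamma (a + b) / (Real.Gamma a * Real.Gamma b))
    else 0)

/-- The generalized gamma GG(c,p) distribution on ℝ, via its density. -/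
noncomputable def genGammaM (c p : ℝ) : Measure ℝ :=
  volume.withDensity fun x => ENNReal.ofReal
    (if 0 < x then p / Real.Gamma (c / p) * x ^ (c - 1) * Real.exp (-(x ^ p)) else 0)

/-- The Gamma(r,1) distribution on ℝ, via its density. -/
noncomputable def gammaM (r : ℝ) : Measure ℝ :=
  volume.withDensity fun x => ENNReal.ofReal
    (if 0 < x then x ^ (r - 1) * Real.exp (-x) / Real.Gamma r else 0)

/-- The standard exponential distribution on ℝ, via its density. -/
noncomputable def expM : Measure ℝ :=
  volume.withDensity fun x => ENNReal.ofReal (if 0 < x then Real.exp (-x) else 0)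


lemma meas_betaish (a b : ℝ) : Measurable (fun x : ℝ => x ^ (a-1) * (1-x) ^ (b-1)) :=
  ((measurable_id : Measurable (id : ℝ → ℝ)).pow_const _ |>.mul
    (((measurable_const.sub measurable_id : Measurable fun x : ℝ => 1 - x)).pow_const _))

lemma rpow_le_two_abs {t c : ℝ} (h1 : 1/2 ≤ t) (h2 : t ≤ 1) : t ^ c ≤ 2 ^ |c| := by
  rcases le_or_gt 0 c with hc | hc
  · rw [abs_of_nonneg hc]
    calc t ^ c ≤ 1 ^ c := Real.rpow_le_rpow (by linarith) h2 hc
    _ = 1 := Real.one_rpow c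
    _ ≤ 2 ^ c := Real.one_le_rpow one_le_two hc
  · rw [abs_of_neg hc]
    calc t ^ c ≤ (1/2) ^ c := Real.rpow_le_rpow_of_nonpos (by norm_num) h1 hc.le
    _ = 2 ^ (-c) := by
        rw [one_div, Real.inv_rpow (by norm_num : (0:ℝ) ≤ 2), ← Real.rpow_neg (by norm_num)]

lemma integrableOn_betaish {a b : ℝ} (ha : 0 < a) (hb : 0 < b) :
    IntegrableOn (fun x : ℝ => x ^ (a-1) * (1-x) ^ (b-1)) (Ioo 0 1) volume := by
  have h1 : IntegrableOn (fun x : ℝ => x ^ (a-1) * (1-x) ^ (b-1)) (Ioc 0 (1/2)) volume := by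
    have hint : IntegrableOn (fun x : ℝ => x ^ (a-1)) (Ioc 0 (1/2)) volume := by
      have := intervalIntegral.intervalIntegrable_rpow' (a := 0) (b := 1/2) (r := a-1) (by linarith)
      rwa [intervalIntegrable_iff_integrableOn_Ioc_of_le (by norm_num)] at this
    refine Integrable.mono' (hint.const_mul (2 ^ |b-1|)) (meas_betaish a b).aestronglyMeasurable.restrict ?_
    filter_upwards [ae_restrict_mem measurableSet_Ioc] with x hx
    rw [Real.norm_eq_abs, abs_mul, abs_of_nonneg (Real.rpow_nonneg hx.1.le _),
      abs_of_nonneg (Real.rpow_nonneg (by linarith [hx.2] : (0:ℝ) ≤ 1-x) _), mul_comm ((2:ℝ) ^ |b-1|)]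
    exact mul_le_mul_of_nonneg_left (rpow_le_two_abs (by linarith [hx.2]) (by linarith [hx.1]))
      (Real.rpow_nonneg hx.1.le _)
  have h2 : IntegrableOn (fun x : ℝ => x ^ (a-1) * (1-x) ^ (b-1)) (Ioo (1/2) 1) volume := by
    have hint : IntegrableOn (fun x : ℝ => (1-x) ^ (b-1)) (Ioo (1/2) 1) volume := by
      have := ((intervalIntegral.intervalIntegrable_rpow' (a := 0) (b := 1/2) (r := b-1)
        (by linarith)).comp_sub_left 1).symm
      rw [show (1:ℝ)-0 = 1 by norm_num, show (1:ℝ)-1/2 = 1/2 by norm_num,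
        intervalIntegrable_iff_integrableOn_Ioc_of_le (by norm_num : (1:ℝ)/2 ≤ 1)] at this
      exact this.mono_set Ioo_subset_Ioc_self
    refine Integrable.mono' (hint.const_mul (2 ^ |a-1|)) (meas_betaish a b).aestronglyMeasurable.restrict ?_
    filter_upwards [ae_restrict_mem measurableSet_Ioo] with x hx
    rw [Real.norm_eq_abs, abs_mul, abs_of_nonneg (Real.rpow_nonneg (by linarith [hx.1] : (0:ℝ) ≤ x) _),
      abs_of_nonneg (Real.rpow_nonneg (by linarith [hx.2] : (0:ℝ) ≤ 1-x) _)]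
    exact mul_le_mul_of_nonneg_right (rpow_le_two_abs hx.1.le hx.2.le)
      (Real.rpow_nonneg (by linarith [hx.2]) _)
  have hset : Ioo (0:ℝ) 1 = Ioc 0 (1/2) ∪ Ioo (1/2) 1 := by
    ext x; simp only [mem_Ioo, mem_union, mem_Ioc]; constructor
    · rintro ⟨h0, h1⟩; rcases le_or_gt x (1/2) with h | h
      · exact Or.inl ⟨h0, h⟩
      · exact Or.inr ⟨h, h1⟩
    · rintro (⟨h0, h⟩ | ⟨h, h1⟩) <;> constructor <;> linarith
  rw [hset]
  exact h1.union h2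

lemma integrableOn_G {a b : ℝ} (ha : 0 < a) (hb : 0 < b) {s : ℝ} (hs : 0 ≤ s) :
    IntegrableOn (fun u : ℝ => (1-u)^(a-1) * u^(b-1) * Real.exp (-(s*u))) (Ioo 0 1) volume := by
  refine Integrable.mono' ((integrableOn_betaish hb ha)) ?_ ?_
  · exact ((((measurable_const.sub measurable_id : Measurable fun x : ℝ => 1 - x)).pow_const _ |>.mul
      ((measurable_id : Measurable (id : ℝ → ℝ)).pow_const _)).mul
      (((measurable_const.mul measurable_id).neg : Measurable fun x : ℝ => -(s*x)).exp)).aestronglyMeasurable.restrict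
  · filter_upwards [ae_restrict_mem measurableSet_Ioo] with x hx
    have h1 : (0:ℝ) ≤ 1 - x := by linarith [hx.2]
    have hprod : (0:ℝ) ≤ (1-x)^(a-1) * x^(b-1) :=
      mul_nonneg (Real.rpow_nonneg h1 _) (Real.rpow_nonneg hx.1.le _)
    rw [Real.norm_eq_abs, abs_of_nonneg (mul_nonneg hprod (Real.exp_nonneg _)), mul_comm (x ^ (b-1))]
    calc (1-x)^(a-1) * x^(b-1) * Real.exp (-(s*x)) ≤ (1-x)^(a-1) * x^(b-1) * 1 := by
          refine mul_le_mul_of_nonneg_left ?_ hprod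
          rw [Real.exp_le_one_iff]
          simp only [neg_nonpos]
          exact mul_nonneg hs hx.1.le
      _ = (1-x)^(a-1) * x^(b-1) := mul_one _
      _ ≤ (1-x)^(a-1) * x^(b-1) := le_refl _

lemma tendsto_termA {a b : ℝ} (ha : 0 < a) (hb : 0 < b) :
    Tendsto (fun s : ℝ => ∫ v in Ioi (0:ℝ),
        (Ioo (0:ℝ) (s/2)).indicator (fun v => (1-v/s)^(a-1) * (Real.exp (-v) * v^(b-1))) v)
      atTop (nhds (Real.Gamma b)) := by
  rw [Real.Gamma_eq_integral hb]
  refine tendsto_integral_filter_of_dominated_convergence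
    (fun v => 2^|a-1| * (Real.exp (-v) * v^(b-1))) ?_ ?_ ?_ ?_
  · filter_upwards with s
    refine (Measurable.indicator ?_ measurableSet_Ioo).aestronglyMeasurable
    exact ((measurable_const.sub (measurable_id.div_const s)).pow_const _).mul
      ((measurable_id.neg.exp).mul ((measurable_id : Measurable (id : ℝ → ℝ)).pow_const _))
  · filter_upwards [eventually_gt_atTop (0:ℝ)] with s hs
    filter_upwards [ae_restrict_mem measurableSet_Ioi] with v hv0
    by_cases hv : v ∈ Ioo (0:ℝ) (s/2)
    · rw [indicator_of_mem hv]
      have h0 : (0:ℝ) ≤ Real.exp (-v) * v^(b-1) :=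
        mul_nonneg (Real.exp_nonneg _) (Real.rpow_nonneg hv.1.le _)
      have hds : v / s < 1/2 := (div_lt_iff₀ hs).2 (by linarith [hv.2])
      have hds0 : 0 ≤ v / s := div_nonneg hv.1.le hs.le
      rw [Real.norm_eq_abs, abs_of_nonneg (mul_nonneg (Real.rpow_nonneg (by linarith) _) h0)]
      exact mul_le_mul_of_nonneg_right (rpow_le_two_abs (by linarith) (by linarith)) h0
    · rw [indicator_of_notMem hv, norm_zero]
      have : (0:ℝ) ≤ 2^|a-1| := Real.rpow_nonneg (by norm_num) _
      nlinarith [Real.exp_nonneg (-v), Real.rpow_nonneg (le_of_lt hv0) (b-1),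
        mul_nonneg (Real.exp_nonneg (-v)) (Real.rpow_nonneg (le_of_lt hv0) (b-1))]
  · exact ((Real.GammaIntegral_convergent hb).const_mul _)
  · filter_upwards [ae_restrict_mem measurableSet_Ioi] with v hv
    have hev : ∀ᶠ s : ℝ in atTop, (Ioo (0:ℝ) (s/2)).indicator
        (fun v => (1-v/s)^(a-1) * (Real.exp (-v) * v^(b-1))) v
        = (1-v/s)^(a-1) * (Real.exp (-v) * v^(b-1)) := by
      filter_upwards [eventually_gt_atTop (2*v)] with s hs
      exact indicator_of_mem (Set.mem_Ioo.2 ⟨hv, by linarith [hs]⟩) _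
    refine Tendsto.congr' (EventuallyEq.symm hev) ?_
    have h1 : Tendsto (fun s : ℝ => 1 - v / s) atTop (nhds 1) := by
      simpa using (tendsto_const_nhds (x := (1:ℝ))).sub (Tendsto.div_atTop (tendsto_const_nhds : Tendsto (fun _ : ℝ => v) atTop (nhds v)) tendsto_id)
    have h2 : Tendsto (fun s : ℝ => (1 - v / s)^(a-1)) atTop (nhds 1) := by
      have := (Real.continuousAt_rpow_const 1 (a-1) (Or.inl one_ne_zero)).tendsto.comp h1
      simpa [Function.comp_def] using this
    simpa using h2.mul_const (Real.exp (-v) * v^(b-1))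

lemma sb_termA_eq {a b : ℝ} {s : ℝ} (hs : 0 < s) :
    s ^ b * ∫ u in Ioo (0:ℝ) (1/2), (1-u)^(a-1) * u^(b-1) * Real.exp (-(s*u)) =
    ∫ v in Ioi (0:ℝ),
      (Ioo (0:ℝ) (s/2)).indicator (fun v => (1-v/s)^(a-1) * (Real.exp (-v) * v^(b-1))) v := by
  have hsne : s ≠ 0 := ne_of_gt hs
  -- RHS as interval integral
  have hRHS : (∫ v in Ioi (0:ℝ),
      (Ioo (0:ℝ) (s/2)).indicator (fun v => (1-v/s)^(a-1) * (Real.exp (-v) * v^(b-1))) v) =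
      ∫ v in (0:ℝ)..(s/2), (1-v/s)^(a-1) * (Real.exp (-v) * v^(b-1)) := by
    rw [integral_indicator measurableSet_Ioo, Measure.restrict_restrict measurableSet_Ioo,
      inter_eq_self_of_subset_left (Ioo_subset_Ioi_self),
      intervalIntegral.integral_of_le (by positivity), integral_Ioc_eq_integral_Ioo]
  rw [hRHS]
  -- LHS as interval integral
  have hLHS : (∫ u in Ioo (0:ℝ) (1/2), (1-u)^(a-1) * u^(b-1) * Real.exp (-(s*u))) =
      ∫ u in (0:ℝ)..(1/2), (1-u)^(a-1) * u^(b-1) * Real.exp (-(s*u)) := by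
    rw [intervalIntegral.integral_of_le (by norm_num), integral_Ioc_eq_integral_Ioo]
  rw [hLHS]
  -- change of variables
  have hcv := intervalIntegral.integral_comp_div (a := 0) (b := s/2)
    (fun u => (1-u)^(a-1) * u^(b-1) * Real.exp (-(s*u))) hsne
  rw [zero_div, div_div_cancel_left' hsne] at hcv
  have hcongr : ∫ x in (0:ℝ)..(s/2), (1-x/s)^(a-1) * (x/s)^(b-1) * Real.exp (-(s*(x/s))) =
      ∫ x in (0:ℝ)..(s/2), s^(1-b) * ((1-x/s)^(a-1) * (Real.exp (-x) * x^(b-1))) := by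
    refine intervalIntegral.integral_congr fun x hx => ?_
    rw [uIcc_of_le (by positivity)] at hx
    have hx0 : 0 ≤ x := hx.1
    have h1 : s * (x/s) = x := by field_simp
    have h2 : (x/s)^(b-1) = x^(b-1) * s^(1-b) := by
      rw [Real.div_rpow hx0 hs.le, div_eq_mul_inv, ← Real.rpow_neg hs.le, neg_sub]
    rw [h1, h2]; ring
  rw [hcongr, intervalIntegral.integral_const_mul, smul_eq_mul] at hcv
  simp only [show (2:ℝ)⁻¹ = 1/2 from by norm_num] at hcv
  have hcv2 : (∫ u in (0:ℝ)..(1/2), (1-u)^(a-1) * u^(b-1) * Real.exp (-(s*u))) =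
      s⁻¹ * (s^(1-b) * ∫ x in (0:ℝ)..(s/2), (1-x/s)^(a-1) * (Real.exp (-x) * x^(b-1))) := by
    rw [hcv, ← mul_assoc, inv_mul_cancel₀ hsne, one_mul]
  rw [hcv2]
  have hcoef : s ^ b * s⁻¹ * s^(1-b) = 1 := by
    rw [← Real.rpow_neg_one s, ← Real.rpow_add hs, ← Real.rpow_add hs,
      show b + -1 + (1-b) = 0 by ring, Real.rpow_zero]
  calc s ^ b * (s⁻¹ * (s^(1-b) * ∫ x in (0:ℝ)..(s/2), (1-x/s)^(a-1) * (Real.exp (-x) * x^(b-1))))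
      = (s ^ b * s⁻¹ * s^(1-b)) * ∫ x in (0:ℝ)..(s/2), (1-x/s)^(a-1) * (Real.exp (-x) * x^(b-1)) := by ring
    _ = ∫ x in (0:ℝ)..(s/2), (1-x/s)^(a-1) * (Real.exp (-x) * x^(b-1)) := by rw [hcoef, one_mul]

lemma tendsto_termB {a b : ℝ} (ha : 0 < a) (hb : 0 < b) :
    Tendsto (fun s : ℝ => s ^ b * ∫ u in Ico (1/2:ℝ) 1, (1-u)^(a-1) * u^(b-1) * Real.exp (-(s*u)))
      atTop (nhds 0) := by
  set K := ∫ u in Ioo (0:ℝ) 1, (1-u)^(a-1) * u^(b-1) with hK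
  have hKint : IntegrableOn (fun u : ℝ => (1-u)^(a-1) * u^(b-1)) (Ioo 0 1) volume := by
    have := integrableOn_betaish hb ha
    refine this.congr_fun (fun x _ => by ring) measurableSet_Ioo
  refine squeeze_zero_norm' (a := fun s => (s ^ b * Real.exp (-(1/2 * s))) * K) ?_ ?_
  · filter_upwards [eventually_ge_atTop (0:ℝ)] with s hs
    have hIco : (Ico (1/2:ℝ) 1) ⊆ Ioo 0 1 := fun x hx => ⟨by linarith [hx.1], hx.2⟩
    have hGint : IntegrableOn (fun u : ℝ => (1-u)^(a-1) * u^(b-1) * Real.exp (-(s*u)))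
        (Ico (1/2:ℝ) 1) volume := (integrableOn_G ha hb hs).mono_set hIco
    have hnn : ∀ u ∈ Ico (1/2:ℝ) 1, 0 ≤ (1-u)^(a-1) * u^(b-1) * Real.exp (-(s*u)) := by
      intro u hu
      exact mul_nonneg (mul_nonneg (Real.rpow_nonneg (by linarith [hu.2]) _)
        (Real.rpow_nonneg (by linarith [hu.1]) _)) (Real.exp_nonneg _)
    have hInn : 0 ≤ ∫ u in Ico (1/2:ℝ) 1, (1-u)^(a-1) * u^(b-1) * Real.exp (-(s*u)) :=
      setIntegral_nonneg measurableSet_Ico hnn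
    have hb1 : (∫ u in Ico (1/2:ℝ) 1, (1-u)^(a-1) * u^(b-1) * Real.exp (-(s*u))) ≤
        Real.exp (-(1/2 * s)) * K := by
      calc (∫ u in Ico (1/2:ℝ) 1, (1-u)^(a-1) * u^(b-1) * Real.exp (-(s*u)))
          ≤ ∫ u in Ico (1/2:ℝ) 1, Real.exp (-(1/2 * s)) * ((1-u)^(a-1) * u^(b-1)) := by
            refine setIntegral_mono_on hGint ((hKint.mono_set hIco).const_mul _)
              measurableSet_Ico fun u hu => ?_
            have h1u : (0:ℝ) ≤ 1 - u := by linarith [hu.2]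
            have hexp : Real.exp (-(s*u)) ≤ Real.exp (-(1/2 * s)) := by
              apply Real.exp_le_exp.2
              have : 1/2 * s ≤ s * u := by nlinarith [hu.1, hu.2]
              linarith
            calc (1-u)^(a-1) * u^(b-1) * Real.exp (-(s*u))
                ≤ (1-u)^(a-1) * u^(b-1) * Real.exp (-(1/2 * s)) := by
                  exact mul_le_mul_of_nonneg_left hexp
                    (mul_nonneg (Real.rpow_nonneg h1u _) (Real.rpow_nonneg (by linarith [hu.1]) _))
              _ = Real.exp (-(1/2 * s)) * ((1-u)^(a-1) * u^(b-1)) := by ring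
        _ = Real.exp (-(1/2 * s)) * ∫ u in Ico (1/2:ℝ) 1, (1-u)^(a-1) * u^(b-1) := by
            rw [integral_const_mul]
        _ ≤ Real.exp (-(1/2 * s)) * K := by
            refine mul_le_mul_of_nonneg_left ?_ (Real.exp_nonneg _)
            refine setIntegral_mono_set hKint ?_ (HasSubset.Subset.eventuallyLE hIco)
            filter_upwards [ae_restrict_mem measurableSet_Ioo] with u hu
            exact mul_nonneg (Real.rpow_nonneg (by linarith [hu.2]) _)
              (Real.rpow_nonneg hu.1.le _)
    rw [Real.norm_eq_abs, abs_of_nonneg (mul_nonneg (Real.rpow_nonneg hs _) hInn)]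
    calc s ^ b * ∫ u in Ico (1/2:ℝ) 1, (1-u)^(a-1) * u^(b-1) * Real.exp (-(s*u))
        ≤ s ^ b * (Real.exp (-(1/2 * s)) * K) :=
          mul_le_mul_of_nonneg_left hb1 (Real.rpow_nonneg hs _)
      _ = (s ^ b * Real.exp (-(1/2 * s))) * K := by ring
  · have := (tendsto_rpow_mul_exp_neg_mul_atTop_nhds_zero b (1/2) (by norm_num)).mul_const K
    simpa using this

lemma tendsto_sb_mul {a b : ℝ} (ha : 0 < a) (hb : 0 < b) :
    Tendsto (fun s : ℝ => s ^ b * ∫ u in Ioo (0:ℝ) 1, (1-u)^(a-1) * u^(b-1) * Real.exp (-(s*u)))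
      atTop (nhds (Real.Gamma b)) := by
  have h := (tendsto_termA ha hb).add (tendsto_termB ha hb)
  rw [add_zero] at h
  refine Tendsto.congr' ?_ h
  filter_upwards [eventually_gt_atTop (0:ℝ)] with s hs
  have hset : Ioo (0:ℝ) 1 = Ioo 0 (1/2) ∪ Ico (1/2) 1 := by
    ext x; simp only [mem_Ioo, mem_union, mem_Ico]; constructor
    · rintro ⟨h0, h1⟩; rcases lt_or_ge x (1/2) with h | h
      · exact Or.inl ⟨h0, h⟩
      · exact Or.inr ⟨h, h1⟩
    · rintro (⟨h0, h⟩ | ⟨h, h1⟩) <;> constructor <;> linarith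
  have hdisj : Disjoint (Ioo (0:ℝ) (1/2)) (Ico (1/2) 1) := by
    rw [Set.disjoint_left]; rintro x ⟨_, hx2⟩ ⟨hx3, _⟩; linarith
  have hsplit : (∫ u in Ioo (0:ℝ) 1, (1-u)^(a-1) * u^(b-1) * Real.exp (-(s*u))) =
      (∫ u in Ioo (0:ℝ) (1/2), (1-u)^(a-1) * u^(b-1) * Real.exp (-(s*u))) +
      ∫ u in Ico (1/2:ℝ) 1, (1-u)^(a-1) * u^(b-1) * Real.exp (-(s*u)) := by
    rw [hset]
    exact setIntegral_union hdisj measurableSet_Ico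
      ((integrableOn_G ha hb hs.le).mono_set (by rw [hset]; exact subset_union_left))
      ((integrableOn_G ha hb hs.le).mono_set (by rw [hset]; exact subset_union_right))
  rw [hsplit, mul_add, sb_termA_eq hs]


instance : SFinite expM := by unfold expM; infer_instance


lemma expM_Ioi {t : ℝ} (ht : 0 ≤ t) : expM (Ioi t) = ENNReal.ofReal (Real.exp (-t)) := by
  unfold expM
  rw [withDensity_apply _ measurableSet_Ioi]
  have h1 : ∫⁻ y in Ioi t, ENNReal.ofReal (if 0 < y then Real.exp (-y) else 0) =
      ∫⁻ y in Ioi t, ENNReal.ofReal (Real.exp (-y)) := by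
    refine setLIntegral_congr_fun measurableSet_Ioi (fun y hy => ?_)
    rw [if_pos (lt_of_le_of_lt ht hy)]
  rw [h1]
  have hint : IntegrableOn (fun y : ℝ => Real.exp (-y)) (Ioi t) volume := by
    simpa using exp_neg_integrableOn_Ioi t one_pos
  rw [← ofReal_integral_eq_lintegral_ofReal hint
    (ae_of_all _ fun y => Real.exp_nonneg _), integral_exp_neg_Ioi]

lemma integrableOn_F {a b C s : ℝ} (ha : 0 < a) (hb : 0 < b) (hs : 0 ≤ s) :
    IntegrableOn (fun x : ℝ => x^(a-1) * (1-x)^(b-1) * C * Real.exp (-(s*(1-x)))) (Ioo 0 1) volume := by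
  refine Integrable.mono' ((integrableOn_betaish ha hb).const_mul |C|) ?_ ?_
  · refine (((meas_betaish a b).mul_const C).mul ?_).aestronglyMeasurable.restrict
    exact ((measurable_const.mul (measurable_const.sub measurable_id) :
      Measurable fun x : ℝ => s * (1-x)).neg).exp
  · filter_upwards [ae_restrict_mem measurableSet_Ioo] with x hx
    have h1 : (0:ℝ) ≤ 1 - x := by linarith [hx.2]
    have hbase : (0:ℝ) ≤ x^(a-1) * (1-x)^(b-1) :=
      mul_nonneg (Real.rpow_nonneg hx.1.le _) (Real.rpow_nonneg h1 _)
    rw [Real.norm_eq_abs, abs_mul, abs_mul, abs_of_nonneg hbase,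
      abs_of_nonneg (Real.exp_nonneg _)]
    have hexp : Real.exp (-(s*(1-x))) ≤ 1 := by
      rw [Real.exp_le_one_iff]
      simp only [neg_nonpos]
      exact mul_nonneg hs h1
    calc x^(a-1) * (1-x)^(b-1) * |C| * Real.exp (-(s*(1-x)))
        ≤ x^(a-1) * (1-x)^(b-1) * |C| * 1 :=
          mul_le_mul_of_nonneg_left hexp (mul_nonneg hbase (abs_nonneg _))
      _ = |C| * (x^(a-1) * (1-x)^(b-1)) := by ring

lemma measure_eq {a b : ℝ} (ha : 0 < a) (hb : 0 < b) {s : ℝ} (hs : 0 < s) :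
    ((betaM a b).prod expM) {q : ℝ × ℝ | 1 - q.1 < q.2 / s} =
    ENNReal.ofReal (∫ x in Ioo (0:ℝ) 1,
      x^(a-1) * (1-x)^(b-1) * (Real.Gamma (a+b)/(Real.Gamma a * Real.Gamma b)) *
        Real.exp (-(s*(1-x)))) := by
  set C := Real.Gamma (a+b)/(Real.Gamma a * Real.Gamma b) with hCdef
  have hC : 0 < C := div_pos (Real.Gamma_pos_of_pos (by linarith))
    (mul_pos (Real.Gamma_pos_of_pos ha) (Real.Gamma_pos_of_pos hb))
  have hSm : MeasurableSet {q : ℝ × ℝ | 1 - q.1 < q.2 / s} :=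
    measurableSet_lt (measurable_const.sub measurable_fst) (measurable_snd.div_const s)
  rw [Measure.prod_apply hSm]
  have hfmeas : Measurable (fun x : ℝ =>
      ENNReal.ofReal (if 0 < x ∧ x < 1 then x^(a-1)*(1-x)^(b-1)*C else 0)) := by
    refine Measurable.ennreal_ofReal ?_
    refine Measurable.ite ?_ ((meas_betaish a b).mul_const C) measurable_const
    exact (measurableSet_lt measurable_const measurable_id).inter
      (measurableSet_lt measurable_id measurable_const)
  have hgmeas : Measurable fun x : ℝ =>
      expM (Prod.mk x ⁻¹' {q : ℝ × ℝ | 1 - q.1 < q.2 / s}) :=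
    measurable_measure_prodMk_left hSm
  unfold betaM
  rw [lintegral_withDensity_eq_lintegral_mul _ hfmeas hgmeas]
  have hpt : ∀ x : ℝ,
      ((fun x : ℝ => ENNReal.ofReal (if 0 < x ∧ x < 1 then x^(a-1)*(1-x)^(b-1)*C else 0)) *
        fun x : ℝ => expM (Prod.mk x ⁻¹' {q : ℝ × ℝ | 1 - q.1 < q.2 / s})) x =
      ENNReal.ofReal (if 0 < x ∧ x < 1 then
        x^(a-1)*(1-x)^(b-1)*C*Real.exp (-(s*(1-x))) else 0) := by
    intro x
    simp only [Pi.mul_apply]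
    by_cases hx : 0 < x ∧ x < 1
    · rw [if_pos hx, if_pos hx]
      have hpre : Prod.mk x ⁻¹' {q : ℝ × ℝ | 1 - q.1 < q.2 / s} = Ioi ((1-x)*s) := by
        ext y
        simp only [mem_preimage, mem_setOf_eq, mem_Ioi]
        exact lt_div_iff₀ hs
      rw [hpre, expM_Ioi (mul_nonneg (by linarith [hx.2]) hs.le)]
      rw [← ENNReal.ofReal_mul (by
        have h1 : (0:ℝ) ≤ 1 - x := by linarith [hx.2]
        exact mul_nonneg (mul_nonneg (Real.rpow_nonneg hx.1.le _) (Real.rpow_nonneg h1 _)) hC.le)]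
      congr 1
      rw [mul_comm (1-x) s]
    · rw [if_neg hx, if_neg hx, ENNReal.ofReal_zero, zero_mul]
  rw [lintegral_congr hpt]
  have hind : (fun x : ℝ => if 0 < x ∧ x < 1 then
      x^(a-1)*(1-x)^(b-1)*C*Real.exp (-(s*(1-x))) else 0) =
      (Ioo (0:ℝ) 1).indicator (fun x => x^(a-1)*(1-x)^(b-1)*C*Real.exp (-(s*(1-x)))) := by
    funext x
    simp [Set.indicator_apply, mem_Ioo]
  have hint : Integrable (fun x : ℝ => if 0 < x ∧ x < 1 then
      x^(a-1)*(1-x)^(b-1)*C*Real.exp (-(s*(1-x))) else 0) volume := by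
    rw [hind]
    exact (integrable_indicator_iff measurableSet_Ioo).2 (integrableOn_F ha hb hs.le)
  have hnn : 0 ≤ᶠ[ae volume] (fun x : ℝ => if 0 < x ∧ x < 1 then
      x^(a-1)*(1-x)^(b-1)*C*Real.exp (-(s*(1-x))) else 0) := by
    refine ae_of_all _ fun x => ?_
    show (0:ℝ) ≤ _
    simp only
    by_cases hx : 0 < x ∧ x < 1
    · rw [if_pos hx]
      have h1 : (0:ℝ) ≤ 1 - x := by linarith [hx.2]
      exact mul_nonneg (mul_nonneg (mul_nonneg (Real.rpow_nonneg hx.1.le _)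
        (Real.rpow_nonneg h1 _)) hC.le) (Real.exp_nonneg _)
    · rw [if_neg hx]
  rw [← ofReal_integral_eq_lintegral_ofReal hint hnn]
  congr 1
  rw [hind, integral_indicator measurableSet_Ioo]

lemma reflect_integral (a b s : ℝ) :
    (∫ x in Ioo (0:ℝ) 1, x^(a-1) * (1-x)^(b-1) * Real.exp (-(s*(1-x)))) =
    ∫ u in Ioo (0:ℝ) 1, (1-u)^(a-1) * u^(b-1) * Real.exp (-(s*u)) := by
  rw [← integral_Ioc_eq_integral_Ioo, ← intervalIntegral.integral_of_le zero_le_one,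
      ← integral_Ioc_eq_integral_Ioo, ← intervalIntegral.integral_of_le zero_le_one]
  have h := intervalIntegral.integral_comp_sub_left (a := 0) (b := 1)
    (fun u => (1-u)^(a-1) * u^(b-1) * Real.exp (-(s*u))) 1
  simp only [sub_sub_cancel, sub_zero, sub_self] at h
  exact h

theorem beta_exp_tail (a b p : ℝ) (ha : 0 < a) (hb : 0 < b) (hp : 0 < p) :
    Tendsto (fun w : ℝ =>
        (((betaM a b).prod expM) {q : ℝ × ℝ | 1 - q.1 < q.2 / (p * w)}).toReal /
          (Real.Gamma b / (Real.Gamma a * Real.Gamma b / Real.Gamma (a + b)) * (p * w) ^ (-b)))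
      atTop (nhds 1) := by
  have hΓa : 0 < Real.Gamma a := Real.Gamma_pos_of_pos ha
  have hΓb : 0 < Real.Gamma b := Real.Gamma_pos_of_pos hb
  have hΓab : 0 < Real.Gamma (a+b) := Real.Gamma_pos_of_pos (by linarith)
  have hpw : Tendsto (fun w : ℝ => p * w) atTop atTop :=
    Tendsto.const_mul_atTop hp tendsto_id
  have h2 := ((tendsto_sb_mul ha hb).comp hpw).div_const (Real.Gamma b)
  rw [div_self (ne_of_gt hΓb)] at h2
  refine Tendsto.congr' ?_ h2
  filter_upwards [eventually_gt_atTop (0:ℝ)] with w hw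
  have hs : 0 < p * w := mul_pos hp hw
  simp only [Function.comp]
  set s := p * w
  set C := Real.Gamma (a+b)/(Real.Gamma a * Real.Gamma b) with hCdef
  have hC : 0 < C := div_pos hΓab (mul_pos hΓa hΓb)
  set J := ∫ u in Ioo (0:ℝ) 1, (1-u)^(a-1) * u^(b-1) * Real.exp (-(s*u)) with hJdef
  have hnum : (((betaM a b).prod expM) {q : ℝ × ℝ | 1 - q.1 < q.2 / s}).toReal = C * J := by
    rw [measure_eq ha hb hs, ENNReal.toReal_ofReal]
    · rw [show (fun x : ℝ => x^(a-1) * (1-x)^(b-1) * C * Real.exp (-(s*(1-x)))) =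
        (fun x : ℝ => C * (x^(a-1) * (1-x)^(b-1) * Real.exp (-(s*(1-x))))) from
          funext fun x => by ring]
      rw [integral_const_mul, hJdef, ← reflect_integral a b s]
    · refine setIntegral_nonneg measurableSet_Ioo fun x hx => ?_
      have h1 : (0:ℝ) ≤ 1 - x := by linarith [hx.2]
      exact mul_nonneg (mul_nonneg (mul_nonneg (Real.rpow_nonneg hx.1.le _)
        (Real.rpow_nonneg h1 _)) hC.le) (Real.exp_nonneg _)
  rw [hnum]
  have hsb : (0:ℝ) < s ^ b := Real.rpow_pos_of_pos hs b
  rw [Real.rpow_neg hs.le, hCdef]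
  field_simp
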